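/- arXiv:1803.09521 — 4 statements merged into one kernel-verified Lean document; each statement's English description precedes it below -/
import Mathlib

section
/- Let (𝒜,T) be a Tits arrangement associated to a root system R and let K be a chamber with root basis B^K. Then R is the disjoint union of R⁺ = R ∩ ∑_{α∈B^K} ℝ_{≥0}·α and R⁻ = R ∩ ∑_{α∈B^K} ℝ_{≤0}·α; that is, every root is a non-negative or non-positive linear combination of B^K, and no root is both. -/
open Set

noncomputable section

section Arrangements

variable {V : Type*} [AddCommGroup V] [Module ℝ V] [TopologicalSpace V]

/-- The kernel of a linear functional, as a subset of `V`. -/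
def dualKer (α : Module.Dual ℝ V) : Set V := {v | α v = 0}

/-- A linear hyperplane: the kernel of a nonzero linear functional. -/
def IsLinearHyperplane (H : Set V) : Prop :=
  ∃ α : Module.Dual ℝ V, α ≠ 0 ∧ H = dualKer α

/-- A hyperplane arrangement `(𝒜, T)`: `T` is an open convex cone, `𝒜` a set of linear
hyperplanes, each meeting `T`, which is locally finite in `T`. -/
structure IsHyperplaneArrangement (𝒜 : Set (Set V)) (T : Set V) : Prop where
  T_nonempty : T.Nonempty
  T_open : IsOpen T
  T_convex : Convex ℝ T
  T_cone : ∀ x ∈ T, ∀ c : ℝ, 0 < c → c • x ∈ T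
  hyperplanes : ∀ H ∈ 𝒜, IsLinearHyperplane H
  meets : ∀ H ∈ 𝒜, (H ∩ T).Nonempty
  locallyFinite : ∀ x ∈ T, ∃ U : Set V, IsOpen U ∧ x ∈ U ∧ U ⊆ T ∧
    {H ∈ 𝒜 | (H ∩ U).Nonempty}.Finite

/-- The chambers: connected components of `T \ ⋃ 𝒜`. -/
def chambersOf (𝒜 : Set (Set V)) (T : Set V) : Set (Set V) :=
  {K | ∃ x ∈ T \ ⋃₀ 𝒜, K = connectedComponentIn (T \ ⋃₀ 𝒜) x}

/-- `H` is a wall of the chamber `K`: a hyperplane missing `K` such that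
`H ∩ cl(K)` spans `H`. -/
def IsWall (K H : Set V) : Prop :=
  IsLinearHyperplane H ∧ H ∩ K = ∅ ∧
    (Submodule.span ℝ (H ∩ closure K) : Set V) = H

/-- An open simplicial cone: `⋂_{α ∈ B} α⁻¹(ℝ_{>0})` for a basis `B` of the dual space. -/
def IsOpenSimplicialCone (K : Set V) : Prop :=
  ∃ b : Module.Basis (Fin (Module.finrank ℝ V)) ℝ (Module.Dual ℝ V),
    K = {v | ∀ i, 0 < b i v}

/-- A Tits arrangement: a hyperplane arrangement all of whose chambers are open simplicial
cones (simplicial) and such that every wall of every chamber belongs to `𝒜` (thin). -/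
structure IsTitsArrangement (𝒜 : Set (Set V)) (T : Set V) extends
    IsHyperplaneArrangement 𝒜 T : Prop where
  simplicial : ∀ K ∈ chambersOf 𝒜 T, IsOpenSimplicialCone K
  thin : ∀ K ∈ chambersOf 𝒜 T, ∀ H : Set V, IsWall K H → H ∈ 𝒜

/-- `R` is a root system with associated arrangement `𝒜`: `0 ∉ R`, `R = -R` and
`𝒜 = {ker α | α ∈ R}`. -/
def IsAssociatedRootSystem (𝒜 : Set (Set V)) (R : Set (Module.Dual ℝ V)) : Prop :=
  (0 : Module.Dual ℝ V) ∉ R ∧ (∀ α ∈ R, -α ∈ R) ∧ 𝒜 = {H | ∃ α ∈ R, H = dualKer α}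

/-- The root basis `B^K` of a chamber `K`. -/
def rootBasisOf (R : Set (Module.Dual ℝ V)) (K : Set V) : Set (Module.Dual ℝ V) :=
  {α ∈ R | IsWall K (dualKer α) ∧ ∀ x ∈ K, 0 < α x}

/-- `β` is a non-negative real linear combination of elements of `B`. -/
def InNNRealSpan (B : Set (Module.Dual ℝ V)) (β : Module.Dual ℝ V) : Prop :=
  ∃ (s : Finset (Module.Dual ℝ V)) (c : Module.Dual ℝ V → ℝ),
    ↑s ⊆ B ∧ (∀ α ∈ s, 0 ≤ c α) ∧ β = ∑ α ∈ s, c α • α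

/-- `β` is a non-negative integral linear combination of elements of `B`. -/
def InNatSpan (B : Set (Module.Dual ℝ V)) (β : Module.Dual ℝ V) : Prop :=
  ∃ (s : Finset (Module.Dual ℝ V)) (c : Module.Dual ℝ V → ℕ),
    ↑s ⊆ B ∧ β = ∑ α ∈ s, (c α : ℝ) • α

/-- `β` is an integral linear combination of elements of `B`. -/
def InIntSpan (B : Set (Module.Dual ℝ V)) (β : Module.Dual ℝ V) : Prop :=
  ∃ (s : Finset (Module.Dual ℝ V)) (c : Module.Dual ℝ V → ℤ),
    ↑s ⊆ B ∧ β = ∑ α ∈ s, (c α : ℝ) • α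

/-- The crystallographic property: `R ⊆ ±∑_{α ∈ B^K} ℕ₀ α` for every chamber `K`. -/
def IsCrystallographic (𝒜 : Set (Set V)) (T : Set V) (R : Set (Module.Dual ℝ V)) : Prop :=
  ∀ K ∈ chambersOf 𝒜 T, ∀ β ∈ R,
    InNatSpan (rootBasisOf R K) β ∨ InNatSpan (rootBasisOf R K) (-β)

/-- The chamber complex `𝒮(𝒜,T)`. -/
def chamberComplexOf (𝒜 : Set (Set V)) (T : Set V) : Set (Set V) :=
  {S | ∃ K ∈ chambersOf 𝒜 T, ∃ W : Set (Set V),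
    (∀ H ∈ W, IsWall K H) ∧ S = closure K ∩ ⋂₀ W}

/-- `(𝒜,T)` is `k`-spherical: every simplex of the chamber complex of codimension `k`
meets `T`. -/
def IsKSpherical (𝒜 : Set (Set V)) (T : Set V) (k : ℕ) : Prop :=
  ∀ S ∈ chamberComplexOf 𝒜 T,
    Module.finrank ℝ (Submodule.span ℝ S) = Module.finrank ℝ V - k → (S ∩ T).Nonempty

/-- A reduced root system: `R ∩ ℝα = {±α}` for every `α ∈ R`. -/
def IsReducedRS (R : Set (Module.Dual ℝ V)) : Prop :=
  ∀ α ∈ R, {β ∈ R | ∃ c : ℝ, β = c • α} = {α, -α}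

/-- The hyperplane `H` separates `K` and `K'`. -/
def SeparatesH (H K K' : Set V) : Prop :=
  ∃ α : Module.Dual ℝ V, H = dualKer α ∧ (∀ x ∈ K, 0 < α x) ∧ ∀ x ∈ K', α x < 0

/-- The set `S(K,K')` of hyperplanes of `𝒜` separating `K` and `K'`. -/
def sepSet (𝒜 : Set (Set V)) (K K' : Set V) : Set (Set V) :=
  {H ∈ 𝒜 | SeparatesH H K K'}

/-- The reduction of a set of functionals: the shortest elements on each line. -/
def reducedOf (S : Set (Module.Dual ℝ V)) : Set (Module.Dual ℝ V) :=
  {β ∈ S | ∀ γ ∈ S, ∀ c : ℝ, γ = c • β → 1 ≤ |c|}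

end Arrangements

/-- The standard real vector space `ℝ^r`. -/
abbrev Vr (r : ℕ) : Type := Fin r → ℝ

section ProofAux

variable {r : ℕ}

lemma dualKer_neg (α : Module.Dual ℝ (Vr r)) : dualKer (-α) = dualKer α := by
  ext v; simp [dualKer]

lemma nnspan_nonneg {R : Set (Module.Dual ℝ (Vr r))} {K : Set (Vr r)}
    {γ : Module.Dual ℝ (Vr r)} (h : InNNRealSpan (rootBasisOf R K) γ)
    {x : Vr r} (hx : x ∈ K) : 0 ≤ γ x := by
  obtain ⟨s, c, hsB, hc, hγ⟩ := h
  subst hγ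
  rw [LinearMap.coe_sum, Finset.sum_apply]
  refine Finset.sum_nonneg fun α hα => ?_
  have hαB := hsB hα
  have hpos := hαB.2.2 x hx
  simpa using mul_nonneg (hc α hα) hpos.le

lemma aux_pos (𝒜 : Set (Set (Vr r))) (T : Set (Vr r)) (R : Set (Module.Dual ℝ (Vr r)))
    (hTits : IsTitsArrangement 𝒜 T) (hR : IsAssociatedRootSystem 𝒜 R)
    (K : Set (Vr r)) (hK : K ∈ chambersOf 𝒜 T)
    (β : Module.Dual ℝ (Vr r)) (hβ : β ∈ R) (hpos : ∀ x ∈ K, 0 < β x) :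
    InNNRealSpan (rootBasisOf R K) β := by
  classical
  obtain ⟨b, hb⟩ := hTits.simplicial K hK
  -- dual basis of `b`, viewed in `V`
  let vb : Module.Basis (Fin (Module.finrank ℝ (Vr r))) ℝ (Vr r) :=
    b.dualBasis.map (Module.evalEquiv ℝ (Vr r)).symm
  have bval : ∀ i j, b i (vb j) = if i = j then 1 else 0 := by
    intro i j
    simp only [vb, Module.Basis.map_apply, Module.apply_evalEquiv_symm_apply,
      Module.Basis.dualBasis_apply_self]
  -- the sum of the dual basis vectors lies in K
  have hbv0 : ∀ i, b i (∑ k, vb k) = 1 := by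
    intro i
    rw [map_sum]
    simp [bval]
  have hv0K : (∑ k, vb k) ∈ K := by
    rw [hb]; intro i; rw [hbv0]; norm_num
  -- closure criterion
  have hcl : ∀ v : Vr r, (∀ i, 0 ≤ b i v) → v ∈ closure K := by
    intro v hv
    have htt : Filter.Tendsto (fun ε : ℝ => v + ε • (∑ k, vb k))
        (nhdsWithin 0 (Ioi 0)) (nhds v) := by
      have h1 : Filter.Tendsto (fun ε : ℝ => v + ε • (∑ k, vb k)) (nhds 0)
          (nhds (v + (0:ℝ) • (∑ k, vb k))) :=
        (continuous_const.add (continuous_id.smul continuous_const)).tendsto 0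
      simpa using h1.mono_left nhdsWithin_le_nhds
    refine mem_closure_of_tendsto htt ?_
    filter_upwards [self_mem_nhdsWithin] with ε hε
    rw [hb]
    intro i
    have hε' : (0:ℝ) < ε := hε
    have := hv i
    simp only [map_add, map_smul, hbv0, smul_eq_mul, mul_one, mem_setOf_eq]
    linarith
  -- each vb j lies in closure K
  have hvbcl : ∀ j, vb j ∈ closure K := by
    intro j
    refine hcl _ fun i => ?_
    rw [bval]
    split <;> norm_num
  -- expansion of functionals
  have fexp : ∀ γ : Module.Dual ℝ (Vr r), γ = ∑ j, γ (vb j) • b j := by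
    intro γ
    have hrepr : ∀ j, γ (vb j) = b.repr γ j := by
      intro j
      conv_lhs => rw [← b.sum_repr γ]
      rw [LinearMap.coe_sum, Finset.sum_apply]
      simp [LinearMap.smul_apply, bval]
    conv_lhs => rw [← b.sum_repr γ]
    exact Finset.sum_congr rfl fun j _ => by rw [hrepr j]
  -- expansion of vectors
  have xexp : ∀ x : Vr r, x = ∑ j, b j x • vb j := by
    intro x
    have vrepr : ∀ j, b j x = vb.repr x j := by
      intro j
      conv_lhs => rw [← vb.sum_repr x]
      rw [map_sum]
      simp [map_smul, bval]
    conv_lhs => rw [← vb.sum_repr x]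
    exact Finset.sum_congr rfl fun j _ => by rw [vrepr j]
  -- each kernel is a wall
  have hwall : ∀ i, IsWall K (dualKer (b i)) := by
    intro i
    refine ⟨⟨b i, b.ne_zero i, rfl⟩, ?_, ?_⟩
    · ext x
      simp only [mem_inter_iff, mem_empty_iff_false, iff_false, not_and]
      intro hx hxK
      have h1 : 0 < b i x := by rw [hb] at hxK; exact hxK i
      have h2 : b i x = 0 := hx
      linarith
    · apply subset_antisymm
      · intro x hx
        have hsub : dualKer (b i) ∩ closure K ⊆ (LinearMap.ker (b i) : Set (Vr r)) :=
          fun y hy => hy.1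
        have hx' : x ∈ Submodule.span ℝ (dualKer (b i) ∩ closure K) := hx
        exact Submodule.span_le.mpr hsub hx'
      · intro x hx
        have hx0 : b i x = 0 := hx
        show x ∈ Submodule.span ℝ (dualKer (b i) ∩ closure K)
        rw [xexp x]
        refine Submodule.sum_mem _ fun j _ => ?_
        by_cases hji : j = i
        · subst hji
          rw [hx0, zero_smul]
          exact Submodule.zero_mem _
        · refine Submodule.smul_mem _ _ (Submodule.subset_span ⟨?_, hvbcl j⟩)
          show b i (vb j) = 0
          rw [bval, if_neg (fun h => hji h.symm)]
  -- roots attached to walls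
  have hroot : ∀ i, ∃ (α : Module.Dual ℝ (Vr r)) (t : ℝ),
      α ∈ rootBasisOf R K ∧ 0 < t ∧ α = t • b i := by
    intro i
    have hA : dualKer (b i) ∈ 𝒜 := hTits.thin K hK _ (hwall i)
    rw [hR.2.2] at hA
    obtain ⟨α, hαR, hαker⟩ := hA
    have hα0 : α ≠ 0 := fun h => hR.1 (h ▸ hαR)
    have hzero : ∀ j, j ≠ i → α (vb j) = 0 := by
      intro j hji
      have : vb j ∈ dualKer (b i) := by
        show b i (vb j) = 0
        rw [bval, if_neg (fun h => hji h.symm)]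
      rw [hαker] at this
      exact this
    have hexp : α = α (vb i) • b i := by
      conv_lhs => rw [fexp α]
      exact Finset.sum_eq_single i (fun j _ hji => by rw [hzero j hji, zero_smul])
        (fun h => absurd (Finset.mem_univ i) h)
    set t := α (vb i) with ht
    have htne : t ≠ 0 := by
      intro h
      apply hα0
      rw [hexp, h, zero_smul]
    have hKpos : ∀ s : ℝ, 0 < s → ∀ x ∈ K, 0 < (s • b i) x := by
      intro s hs x hx
      have : 0 < b i x := by rw [hb] at hx; exact hx i
      simpa using mul_pos hs this
    rcases htne.lt_or_gt with hneg | hposi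
    · refine ⟨-α, -t, ⟨hR.2.1 α hαR, ?_, ?_⟩, by linarith, by rw [hexp]; module⟩
      · rw [dualKer_neg, ← hαker]
        exact hwall i
      · intro x hx
        have := hKpos (-t) (by linarith) x hx
        rw [hexp]
        simpa [neg_smul] using this
    · refine ⟨α, t, ⟨hαR, ?_, ?_⟩, hposi, hexp⟩
      · rw [← hαker]; exact hwall i
      · intro x hx
        rw [hexp]
        exact hKpos t hposi x hx
  choose αf tf hαB htf hEq using hroot
  -- coefficients of β are nonnegative
  have hcnn : ∀ j, 0 ≤ β (vb j) := by
    intro j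
    by_contra hneg
    push_neg at hneg
    have hβv0 : 0 < β (∑ k, vb k) := hpos _ hv0K
    set ε : ℝ := -β (vb j) / β (∑ k, vb k) with hε
    have hε' : 0 < ε := div_pos (by linarith) hβv0
    have hmem : vb j + ε • (∑ k, vb k) ∈ K := by
      rw [hb]
      intro i
      simp only [map_add, map_smul, hbv0, smul_eq_mul, mul_one, bval, mem_setOf_eq]
      split <;> linarith
    have := hpos _ hmem
    rw [map_add, map_smul, smul_eq_mul, hε, div_mul_cancel₀ _ hβv0.ne'] at this
    linarith
  -- assemble
  have hβeq : β = ∑ j, (β (vb j) / tf j) • αf j := by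
    conv_lhs => rw [fexp β]
    refine Finset.sum_congr rfl fun j _ => ?_
    rw [hEq j, smul_smul, div_mul_cancel₀ _ (htf j).ne']
  refine ⟨Finset.image αf Finset.univ,
    fun γ => ∑ j ∈ Finset.univ.filter (fun j => αf j = γ), β (vb j) / tf j, ?_, ?_, ?_⟩
  · intro γ hγ
    simp only [Finset.coe_image, mem_image] at hγ
    obtain ⟨j, _, rfl⟩ := hγ
    exact hαB j
  · intro γ _
    exact Finset.sum_nonneg fun j _ => div_nonneg (hcnn j) (htf j).le
  · refine hβeq.trans (Finset.sum_image' _ fun j _ => ?_).symm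
    rw [Finset.sum_smul]
    refine Finset.sum_congr rfl fun k hk => ?_
    rw [(Finset.mem_filter.mp hk).2]

end ProofAux

/-- Lemma on positive/negative roots: for a Tits arrangement `(𝒜,T)`
associated to a root system `R` and a chamber `K`, every root is a non-negative or a
non-positive real linear combination of the root basis `B^K`, and no root is both;
i.e. `R` is the disjoint union of `R⁺` and `R⁻`. -/
theorem statement_0 {r : ℕ} (hr : 1 ≤ r) (𝒜 : Set (Set (Vr r))) (T : Set (Vr r))
    (R : Set (Module.Dual ℝ (Vr r)))
    (hTits : IsTitsArrangement 𝒜 T) (hR : IsAssociatedRootSystem 𝒜 R)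
    (K : Set (Vr r)) (hK : K ∈ chambersOf 𝒜 T) :
    ∀ β ∈ R, Xor' (InNNRealSpan (rootBasisOf R K) β)
      (InNNRealSpan (rootBasisOf R K) (-β)) := by
  intro β hβ
  have hK' := hK
  obtain ⟨x0, hx0, hKeq⟩ := hK'
  have hx0K : x0 ∈ K := by rw [hKeq]; exact mem_connectedComponentIn hx0
  have hKsub : K ⊆ T \ ⋃₀ 𝒜 := by rw [hKeq]; exact connectedComponentIn_subset _ _
  have hsign : ∀ γ ∈ R, (∀ x ∈ K, 0 < γ x) ∨ (∀ x ∈ K, γ x < 0) := by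
    intro γ hγ
    have hne : ∀ x ∈ K, γ x ≠ 0 := by
      intro x hx h0
      have hA : dualKer γ ∈ 𝒜 := by rw [hR.2.2]; exact ⟨γ, hγ, rfl⟩
      exact (hKsub hx).2 ⟨dualKer γ, hA, h0⟩
    have hcont : Continuous γ := LinearMap.continuous_of_finiteDimensional γ
    have hpc : IsPreconnected K := by rw [hKeq]; exact isPreconnected_connectedComponentIn
    have himg : IsPreconnected (γ '' K) := hpc.image γ hcont.continuousOn
    have key : ∀ x ∈ K, ∀ y ∈ K, γ x < 0 → 0 < γ y → False := by
      intro x hx y hy h1 h2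
      have h0 : (0:ℝ) ∈ γ '' K :=
        himg.ordConnected.out (mem_image_of_mem γ hx) (mem_image_of_mem γ hy)
          ⟨h1.le, h2.le⟩
      obtain ⟨z, hzK, hz0⟩ := h0
      exact hne z hzK hz0
    rcases (hne x0 hx0K).lt_or_gt with h | h
    · right
      intro x hx
      rcases (hne x hx).lt_or_gt with h' | h'
      · exact h'
      · exact absurd (key x0 hx0K x hx h h') id
    · left
      intro x hx
      rcases (hne x hx).lt_or_gt with h' | h'
      · exact absurd (key x hx x0 hx0K h' h) id
      · exact h'
  rcases hsign β hβ with hp | hn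
  · refine Or.inl ⟨aux_pos 𝒜 T R hTits hR K hK β hβ hp, ?_⟩
    intro hcon
    have h1 := nnspan_nonneg hcon hx0K
    have h2 := hp x0 hx0K
    simp only [LinearMap.neg_apply] at h1
    linarith
  · refine Or.inr ⟨aux_pos 𝒜 T R hTits hR K hK (-β) (hR.2.1 β hβ)
      (fun x hx => by simpa using hn x hx), ?_⟩
    intro hcon
    have h1 := nnspan_nonneg hcon hx0K
    have h2 := hn x0 hx0K
    linarith
end
end

section
/- Let (𝒜,T) be a crystallographic Tits arrangement with respect to R and let K, L be adjacent chambers. Choose an indexing B^K = {α_1,…,α_r} and let the indexing B^L = {β_1,…,β_r} be compatible with B^K. Assume cl(K) ∩ cl(L) ⊆ ker α_k for some 1 ≤ k ≤ r. Then there exist integers c_i (i = 1,…,r) such that β_i = c_i·α_k + α_i for all i; moreover c_k = −2 and c_i ∈ ℕ₀ for all i ≠ k. -/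
open Set

noncomputable section

lemma exists_smul_of_ker_subset {V : Type*} [AddCommGroup V] [Module ℝ V]
    (f g : Module.Dual ℝ V) (hf : f ≠ 0) (h : ∀ x, f x = 0 → g x = 0) :
    ∃ c : ℝ, g = c • f := by
  obtain ⟨u, hu⟩ : ∃ u, f u ≠ 0 := by
    by_contra hc
    push_neg at hc
    exact hf (by ext x; simp [hc x])
  refine ⟨(f u)⁻¹ * g u, ?_⟩
  ext x
  have h0 : f (x - (f x * (f u)⁻¹) • u) = 0 := by
    simp only [map_sub, map_smul, smul_eq_mul]
    field_simp
    ring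
  have h1 := h _ h0
  simp only [map_sub, map_smul, smul_eq_mul, sub_eq_zero] at h1
  simp only [LinearMap.smul_apply, smul_eq_mul]
  rw [h1]; ring

lemma nonneg_on_closure {r : ℕ} (φ : Module.Dual ℝ (Vr r)) (S : Set (Vr r))
    (h : ∀ x ∈ S, 0 < φ x) : ∀ x ∈ closure S, 0 ≤ φ x := by
  intro x hx
  have hc : IsClosed {y : Vr r | 0 ≤ φ y} :=
    isClosed_le continuous_const φ.continuous_of_finiteDimensional
  exact closure_minimal (fun y hy => (h y hy).le) hc hx

lemma InNatSpan.exists_coeffs {V : Type*} [AddCommGroup V] [Module ℝ V]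
    [TopologicalSpace V]
    {n : ℕ} {f : Fin n → Module.Dual ℝ V} (hinj : Function.Injective f)
    {γ : Module.Dual ℝ V} (h : InNatSpan (Set.range f) γ) :
    ∃ m : Fin n → ℕ, γ = ∑ j, (m j : ℝ) • f j := by
  classical
  obtain ⟨s, c, hs, heq⟩ := h
  set t : Finset (Fin n) := s.preimage f hinj.injOn with ht
  refine ⟨fun j => if j ∈ t then c (f j) else 0, ?_⟩
  have h1 : ∑ x ∈ s, (c x : ℝ) • x = ∑ j ∈ t, (c (f j) : ℝ) • f j := by
    rw [ht, Finset.sum_preimage f s hinj.injOn (fun x => (c x : ℝ) • x)]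
    intro x hx hxr
    exact absurd (hs hx) hxr
  rw [heq, h1]
  have h2 : ∑ j ∈ t, (c (f j) : ℝ) • f j
      = ∑ j ∈ t, (((if j ∈ t then c (f j) else 0 : ℕ)) : ℝ) • f j :=
    Finset.sum_congr rfl fun j hj => by rw [if_pos hj]
  rw [h2]
  exact Finset.sum_subset (Finset.subset_univ t) (fun j _ hj => by rw [if_neg hj]; simp)

lemma rootBasisOf_linearIndependent {r : ℕ} {𝒜 : Set (Set (Vr r))} {T : Set (Vr r)}
    {R : Set (Module.Dual ℝ (Vr r))}
    (hTits : IsTitsArrangement 𝒜 T) (hR : IsAssociatedRootSystem 𝒜 R)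
    {K : Set (Vr r)} (hK : K ∈ chambersOf 𝒜 T)
    {f : Fin r → Module.Dual ℝ (Vr r)} (hinj : Function.Injective f)
    (hran : Set.range f = rootBasisOf R K) :
    LinearIndependent ℝ f := by
  classical
  obtain ⟨b, hKeq⟩ := hTits.simplicial K hK
  -- the dual basis of b, living in V
  set e : Module.Basis (Fin (Module.finrank ℝ (Vr r))) ℝ (Vr r) :=
    b.dualBasis.map (Module.evalEquiv ℝ (Vr r)).symm with he
  have heval : ∀ i j, b i (e j) = if i = j then 1 else 0 := by
    intro i j
    rw [he, Module.Basis.map_apply]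
    rw [Module.apply_evalEquiv_symm_apply, Module.Basis.dualBasis_apply_self]
  set u : Vr r := ∑ j, e j with hu
  have hbu : ∀ i, b i u = 1 := by
    intro i
    rw [hu, map_sum]
    simp [heval]
  have huK : u ∈ K := by
    rw [hKeq]; intro i; rw [hbu]; norm_num
  have hclK : closure K ⊆ {v | ∀ i, 0 ≤ b i v} := by
    apply closure_minimal
    · rw [hKeq]; exact fun v hv i => (hv i).le
    · have hset : {v : Vr r | ∀ i, 0 ≤ b i v} = ⋂ i, {v | 0 ≤ b i v} := by
        ext v; simp
      rw [hset]
      exact isClosed_iInter fun i =>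
        isClosed_le continuous_const (b i).continuous_of_finiteDimensional
  have hnncl : {v : Vr r | ∀ i, 0 ≤ b i v} ⊆ closure K := by
    intro v hv
    have htend : Filter.Tendsto (fun t : ℝ => v + t • u) (nhdsWithin 0 (Set.Ioi 0)) (nhds v) := by
      have h1 : Continuous fun t : ℝ => v + t • u :=
        continuous_const.add (continuous_id.smul continuous_const)
      have h2 := h1.tendsto 0
      simp only [zero_smul, add_zero] at h2
      exact h2.mono_left nhdsWithin_le_nhds
    refine mem_closure_of_tendsto htend ?_
    filter_upwards [self_mem_nhdsWithin] with t ht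
    rw [hKeq]
    intro i
    simp only [map_add, map_smul, smul_eq_mul, hbu]
    have h3 := hv i
    have h4 : (0:ℝ) < t := ht
    linarith
  -- Claim A : every element of the root basis is a positive multiple of some b j
  have claimA : ∀ γ ∈ rootBasisOf R K, ∃ j, ∃ c : ℝ, 0 < c ∧ γ = c • b j := by
    intro γ hγ
    obtain ⟨hγR, hwall, hpos⟩ := hγ
    have hγu : 0 < γ u := hpos u huK
    have hnn : ∀ j, 0 ≤ b.repr γ j := by
      intro j
      by_contra hneg
      push_neg at hneg
      have hne : b.repr γ j ≠ 0 := hneg.ne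
      set N : ℝ := (γ u + 1) / (-(b.repr γ j)) with hN
      have hNpos : 0 < N := div_pos (by linarith) (by linarith)
      have hmem : u + N • e j ∈ K := by
        rw [hKeq]; intro i
        simp only [map_add, map_smul, smul_eq_mul, hbu, heval]
        split
        · linarith
        · linarith
      have hval := hpos _ hmem
      have hexp : γ (u + N • e j) = γ u + N * b.repr γ j := by
        have hge : γ (e j) = b.repr γ j := by
          conv_lhs => rw [← b.sum_repr γ]
          simp only [LinearMap.coe_sum, Finset.sum_apply, LinearMap.smul_apply,
            smul_eq_mul, heval]
          simp
        simp [hge]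
      have hNl : N * b.repr γ j = -(γ u + 1) := by
        rw [hN]
        field_simp
      rw [hexp, hNl] at hval
      linarith
    have hγ0 : γ ≠ 0 := by
      intro h; rw [h] at hγu; simp at hγu
    obtain ⟨j0, hj0⟩ : ∃ j0, 0 < b.repr γ j0 := by
      by_contra hc
      push_neg at hc
      have hz : ∀ j, b.repr γ j = 0 := fun j => le_antisymm (hc j) (hnn j)
      apply hγ0
      have : b.repr γ = 0 := Finsupp.ext hz
      exact b.repr.map_eq_zero_iff.mp this
    have hsub : dualKer γ ∩ closure K ⊆ {x | b j0 x = 0} := by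
      rintro x ⟨hx1, hx2⟩
      have hxnn := hclK hx2
      have hexp : γ x = ∑ j, b.repr γ j * b j x := by
        conv_lhs => rw [← b.sum_repr γ]
        simp only [LinearMap.coe_sum, Finset.sum_apply, LinearMap.smul_apply, smul_eq_mul]
      have hzero : ∑ j, b.repr γ j * b j x = 0 := by rw [← hexp]; exact hx1
      have hterm : ∀ j ∈ Finset.univ, 0 ≤ b.repr γ j * b j x :=
        fun j _ => mul_nonneg (hnn j) (hxnn j)
      have h5 := (Finset.sum_eq_zero_iff_of_nonneg hterm).mp hzero j0 (Finset.mem_univ _)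
      exact (mul_eq_zero.mp h5).resolve_left hj0.ne'
    have hker : ∀ x, γ x = 0 → b j0 x = 0 := by
      intro x hx
      have hspan : Submodule.span ℝ (dualKer γ ∩ closure K) ≤ LinearMap.ker (b j0) :=
        Submodule.span_le.mpr fun y hy => hsub hy
      have hx' : x ∈ (Submodule.span ℝ (dualKer γ ∩ closure K) : Set (Vr r)) :=
        (Set.ext_iff.mp hwall.2.2 x).mpr hx
      exact hspan hx'
    obtain ⟨c0, hc0⟩ := exists_smul_of_ker_subset γ (b j0) hγ0 hker
    have hc0ne : c0 ≠ 0 := by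
      intro h; rw [h, zero_smul] at hc0; exact b.ne_zero j0 hc0
    have hγeq : γ = c0⁻¹ • b j0 := by
      rw [hc0, smul_smul, inv_mul_cancel₀ hc0ne, one_smul]
    have hγuval : γ u = c0⁻¹ := by
      rw [hγeq]; simp [hbu]
    exact ⟨j0, c0⁻¹, by rw [← hγuval]; exact hγu, hγeq⟩
  -- Claim B : every b j has a positive multiple in the root basis
  have claimB : ∀ j, ∃ γ ∈ rootBasisOf R K, ∃ c : ℝ, 0 < c ∧ γ = c • b j := by
    intro j
    have hbj0 : (b j : Module.Dual ℝ (Vr r)) ≠ 0 := b.ne_zero j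
    have hwallj : IsWall K (dualKer (b j)) := by
      refine ⟨⟨b j, hbj0, rfl⟩, ?_, ?_⟩
      · ext x
        simp only [Set.mem_inter_iff, Set.mem_empty_iff_false, iff_false, not_and]
        intro hx1 hx2
        rw [hKeq] at hx2
        exact absurd hx1 (hx2 j).ne'
      · apply Set.Subset.antisymm
        · intro x hx
          have hle : Submodule.span ℝ (dualKer (b j) ∩ closure K) ≤ LinearMap.ker (b j) :=
            Submodule.span_le.mpr fun y hy => hy.1
          exact hle hx
        · intro x hx
          have hxj : e.repr x j = 0 := by
            have hbx : b j x = e.repr x j := by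
              conv_lhs => rw [← e.sum_repr x]
              simp only [map_sum, map_smul, smul_eq_mul, heval]
              simp
            rw [← hbx]; exact hx
          have hxsum : x = ∑ t ∈ Finset.univ.erase j, e.repr x t • e t := by
            conv_lhs => rw [← e.sum_repr x]
            rw [← Finset.sum_erase_add _ _ (Finset.mem_univ j), hxj]
            simp
          rw [hxsum]
          refine Submodule.sum_mem _ fun t ht => Submodule.smul_mem _ _
            (Submodule.subset_span ⟨?_, ?_⟩)
          · show b j (e t) = 0
            rw [heval]
            rw [if_neg (Finset.ne_of_mem_erase ht).symm]
          · exact hnncl (fun i => by rw [heval]; split <;> norm_num)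
    have hA : dualKer (b j) ∈ 𝒜 := hTits.thin K hK _ hwallj
    rw [hR.2.2] at hA
    obtain ⟨ρ, hρR, hρker⟩ := hA
    have hρ0 : ρ ≠ 0 := fun h => hR.1 (h ▸ hρR)
    have hkk : ∀ x, b j x = 0 → ρ x = 0 := by
      intro x hx
      have : x ∈ dualKer (b j) := hx
      rw [hρker] at this
      exact this
    obtain ⟨c, hc⟩ := exists_smul_of_ker_subset (b j) ρ hbj0 hkk
    have hcne : c ≠ 0 := by
      intro h; rw [h, zero_smul] at hc; exact hρ0 hc
    rcases lt_or_gt_of_ne hcne with hneg | hposc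
    · refine ⟨-ρ, ⟨hR.2.1 ρ hρR, ?_, ?_⟩, -c, by linarith, by rw [hc]; exact (neg_smul c (b j)).symm⟩
      · have hkerneg : dualKer (-ρ) = dualKer (b j) := by
          ext x
          have h := Set.ext_iff.mp hρker x
          simp only [dualKer, Set.mem_setOf_eq, LinearMap.neg_apply, neg_eq_zero] at h ⊢
          exact h.symm
        rw [hkerneg]; exact hwallj
      · intro x hxK
        have := (hKeq ▸ hxK) j
        rw [hc]
        simp only [LinearMap.neg_apply, LinearMap.smul_apply, smul_eq_mul]
        nlinarith
    · refine ⟨ρ, ⟨hρR, ?_, ?_⟩, c, hposc, hc⟩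
      · rw [hρker] at hwallj; exact hwallj
      · intro x hxK
        have := (hKeq ▸ hxK) j
        rw [hc]
        simp only [LinearMap.smul_apply, smul_eq_mul]
        nlinarith
  -- assemble
  choose jof cof hcpos hceq using claimA
  have hmem : ∀ i, f i ∈ rootBasisOf R K := fun i => hran ▸ Set.mem_range_self i
  set g : Fin r → Fin (Module.finrank ℝ (Vr r)) := fun i => jof (f i) (hmem i) with hg
  set μ : Fin r → ℝ := fun i => cof (f i) (hmem i) with hμ
  have hgsurj : Function.Surjective g := by
    intro j
    obtain ⟨γ, hγmem, c, hcp, hγeq⟩ := claimB j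
    rw [← hran] at hγmem
    obtain ⟨i, rfl⟩ := hγmem
    refine ⟨i, ?_⟩
    by_contra hne
    have h1 : μ i • b (g i) = c • b j := by
      rw [← hceq (f i) (hmem i), ← hγeq]
    have h2 : (b.repr (μ i • b (g i))) j = (b.repr (c • b j)) j := by rw [h1]
    rw [map_smul, map_smul, Module.Basis.repr_self, Module.Basis.repr_self] at h2
    rw [Finsupp.smul_apply, Finsupp.smul_apply, Finsupp.single_apply, Finsupp.single_apply,
      if_neg hne, if_pos rfl] at h2
    simp at h2
    exact hcp.ne' h2.symm
  have hgbij : Function.Bijective g := by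
    rw [Fintype.bijective_iff_surjective_and_card]
    exact ⟨hgsurj, by simp [Module.finrank_fin_fun]⟩
  have hbg : LinearIndependent ℝ (b ∘ g) := b.linearIndependent.comp g hgbij.1
  have hf' : f = fun i => μ i • (b ∘ g) i := funext fun i => hceq (f i) (hmem i)
  rw [hf']
  set w : Fin r → ℝˣ := fun i => Units.mk0 (μ i) (hcpos (f i) (hmem i)).ne' with hw
  have : (fun i => μ i • (b ∘ g) i) = w • (b ∘ g) := by
    funext i
    simp [hw, Units.smul_def]
  rw [this]
  exact hbg.units_smul w

set_option maxHeartbeats 1000000 in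
/-- Proposition on adjacent chambers: let `(𝒜,T)` be a crystallographic
Tits arrangement with respect to `R`, let `K, L` be adjacent chambers with indexings
`B^K = {α_1,…,α_r}` and `B^L = {β_1,…,β_r}`, the latter compatible with the former
(so `β_k = -α_k` and `β_i ∈ ⟨α_i, α_k⟩` for all `i`), and assume
`cl(K) ∩ cl(L) ⊆ ker α_k`.  Then there are integers `c_i` with `β_i = c_i α_k + α_i`
for all `i`, `c_k = -2`, and `c_i ∈ ℕ₀` for `i ≠ k`. -/
theorem statement_1 {r : ℕ} (𝒜 : Set (Set (Vr r))) (T : Set (Vr r))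
    (R : Set (Module.Dual ℝ (Vr r)))
    (hTits : IsTitsArrangement 𝒜 T) (hR : IsAssociatedRootSystem 𝒜 R)
    (hcrys : IsCrystallographic 𝒜 T R)
    (K L : Set (Vr r)) (hK : K ∈ chambersOf 𝒜 T) (hL : L ∈ chambersOf 𝒜 T) (hKL : K ≠ L)
    (α β : Fin r → Module.Dual ℝ (Vr r))
    (hαinj : Function.Injective α) (hαran : Set.range α = rootBasisOf R K)
    (hβinj : Function.Injective β) (hβran : Set.range β = rootBasisOf R L)
    (k : Fin r)
    (hadj : (Submodule.span ℝ (closure K ∩ closure L) : Set (Vr r)) = dualKer (α k))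
    (hcompat₁ : β k = -α k)
    (hcompat₂ : ∀ i, β i ∈ Submodule.span ℝ {α i, α k}) :
    ∃ c : Fin r → ℤ, (∀ i, β i = c i • α k + α i) ∧ c k = -2 ∧ ∀ i, i ≠ k → 0 ≤ c i := by
  classical
  have hαmem : ∀ j, α j ∈ rootBasisOf R K := fun j => by
    rw [← hαran]; exact Set.mem_range_self j
  have hβmem : ∀ j, β j ∈ rootBasisOf R L := fun j => by
    rw [← hβran]; exact Set.mem_range_self j
  have hliα : LinearIndependent ℝ α := rootBasisOf_linearIndependent hTits hR hK hαinj hαran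
  have hliβ : LinearIndependent ℝ β := rootBasisOf_linearIndependent hTits hR hL hβinj hβran
  have hne : Nonempty (Fin r) := ⟨k⟩
  have hcard : Fintype.card (Fin r) = Module.finrank ℝ (Module.Dual ℝ (Vr r)) := by
    rw [Fintype.card_fin, Subspace.dual_finrank_eq, Module.finrank_fin_fun]
  set Bα := basisOfLinearIndependentOfCardEqFinrank hliα hcard with hBαdef
  have hBα : ⇑Bα = α := coe_basisOfLinearIndependentOfCardEqFinrank hliα hcard
  set Bβ := basisOfLinearIndependentOfCardEqFinrank hliβ hcard with hBβdef
  have hBβ : ⇑Bβ = β := coe_basisOfLinearIndependentOfCardEqFinrank hliβ hcard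
  clear_value Bα Bβ
  have hreprα : ∀ (x : Module.Dual ℝ (Vr r)) (m : Fin r → ℝ),
      x = ∑ j, m j • α j → ∀ j, Bα.repr x j = m j := by
    intro x m hx j
    have hx' : x = ∑ j, m j • Bα j := by rw [hBα]; exact hx
    rw [hx', Bα.repr_sum_self]
  have hreprβ : ∀ (x : Module.Dual ℝ (Vr r)) (m : Fin r → ℝ),
      x = ∑ j, m j • β j → ∀ j, Bβ.repr x j = m j := by
    intro x m hx j
    have hx' : x = ∑ j, m j • Bβ j := by rw [hBβ]; exact hx
    rw [hx', Bβ.repr_sum_self]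
  have hαcl : ∀ j, ∀ x ∈ closure K, 0 ≤ α j x := fun j =>
    nonneg_on_closure (α j) K (hαmem j).2.2
  have hβcl : ∀ j, ∀ x ∈ closure L, 0 ≤ β j x := fun j =>
    nonneg_on_closure (β j) L (hβmem j).2.2
  have hαk0 : α k ≠ 0 := fun h => hR.1 (h ▸ (hαmem k).1)
  -- key claim
  have hkey : ∀ i, i ≠ k → ∃ n : ℕ, β i = (n : ℝ) • α k + α i := by
    intro i hik
    obtain ⟨a, b', hab⟩ := Submodule.mem_span_pair.mp (hcompat₂ i)
    have hsubk : closure K ∩ closure L ⊆ dualKer (α k) := by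
      rw [← hadj]; exact Submodule.subset_span
    obtain ⟨x₀, hx₀p, hx₀pos⟩ : ∃ x ∈ closure K ∩ closure L, 0 < α i x := by
      by_contra hcon
      push_neg at hcon
      have hker : ∀ x, α k x = 0 → α i x = 0 := by
        intro x hx
        have hx' : x ∈ (Submodule.span ℝ (closure K ∩ closure L) : Set (Vr r)) :=
          (Set.ext_iff.mp hadj x).mpr hx
        have hle : Submodule.span ℝ (closure K ∩ closure L) ≤ LinearMap.ker (α i) := by
          rw [Submodule.span_le]
          intro y hy
          exact LinearMap.mem_ker.mpr (le_antisymm (hcon y hy) (hαcl i y hy.1))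
        exact hle hx'
      obtain ⟨c, hc'⟩ := exists_smul_of_ker_subset (α k) (α i) hαk0 hker
      have h1 : Bα.repr (α i) i = 1 := by
        rw [← hBα]; simp [Module.Basis.repr_self_apply]
      have h2 : Bα.repr (α i) i = 0 := by
        rw [hc', ← hBα, map_smul, Finsupp.smul_apply, Module.Basis.repr_self_apply,
          if_neg (Ne.symm hik)]
        simp
      rw [h1] at h2; norm_num at h2
    have hαkx0 : α k x₀ = 0 := hsubk hx₀p
    have hβnn : 0 ≤ β i x₀ := hβcl i x₀ hx₀p.2
    have habx : a * α i x₀ + b' * α k x₀ = β i x₀ := by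
      rw [← hab]; simp
    have habx2 : a * α i x₀ = β i x₀ := by
      rw [hαkx0, mul_zero, add_zero] at habx; exact habx
    have ha_nonneg : 0 ≤ a := by nlinarith [habx2, hβnn, hx₀pos]
    have ha_ne : a ≠ 0 := by
      intro h0
      rw [h0, zero_smul, zero_add] at hab
      have hβk : β i = (-b') • β k := by
        rw [hcompat₁, smul_neg, neg_smul, neg_neg, hab]
      have h1 : Bβ.repr (β i) i = 1 := by
        rw [← hBβ]; simp [Module.Basis.repr_self_apply]
      have h2 : Bβ.repr (β i) i = 0 := by
        rw [hβk, ← hBβ, map_smul, Finsupp.smul_apply, Module.Basis.repr_self_apply,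
          if_neg (Ne.symm hik)]
        simp
      rw [h1] at h2; norm_num at h2
    have ha_pos : 0 < a := ha_nonneg.lt_of_ne (Ne.symm ha_ne)
    have hrepr_ab : ∀ j, Bα.repr (β i) j
        = a * (if i = j then 1 else 0) + b' * (if k = j then 1 else 0) := by
      intro j
      rw [← hab, ← hBα, map_add, map_smul, map_smul, Finsupp.add_apply, Finsupp.smul_apply,
        Finsupp.smul_apply, Module.Basis.repr_self_apply, Module.Basis.repr_self_apply]
      simp [smul_eq_mul]
    have hrepr_i : Bα.repr (β i) i = a := by
      rw [hrepr_ab i, if_pos rfl, if_neg (Ne.symm hik)]; ring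
    have hrepr_k : Bα.repr (β i) k = b' := by
      rw [hrepr_ab k, if_pos rfl, if_neg hik]; ring
    -- crystallographic over K applied to β i
    have hβiR : β i ∈ R := (hβmem i).1
    have hcase := hcrys K hK (β i) hβiR
    rw [← hαran] at hcase
    obtain ⟨m, hm⟩ : ∃ m : Fin r → ℕ, β i = ∑ j, (m j : ℝ) • α j := by
      rcases hcase with h | h
      · exact InNatSpan.exists_coeffs hαinj h
      · exfalso
        obtain ⟨m, hm⟩ := InNatSpan.exists_coeffs hαinj h
        have h1 : Bα.repr (-β i) i = m i := hreprα _ _ hm i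
        have h2 : Bα.repr (-β i) i = -a := by
          rw [map_neg, Finsupp.neg_apply, hrepr_i]
        rw [h2] at h1
        have : (0:ℝ) ≤ m i := Nat.cast_nonneg _
        linarith
    have ham : a = m i := by
      have := hreprα _ _ hm i
      rw [hrepr_i] at this; exact this
    have hbm : b' = m k := by
      have := hreprα _ _ hm k
      rw [hrepr_k] at this; exact this
    -- crystallographic over L applied to α i
    have hαiR : α i ∈ R := (hαmem i).1
    have hcase2 := hcrys L hL (α i) hαiR
    rw [← hβran] at hcase2
    have hαi_expr : α i = a⁻¹ • β i + (a⁻¹ * b') • β k := by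
      have h1 : a • α i = β i + b' • β k := by
        rw [hcompat₁, smul_neg, ← hab]
        abel
      calc α i = a⁻¹ • (a • α i) := by rw [smul_smul, inv_mul_cancel₀ ha_ne, one_smul]
        _ = a⁻¹ • (β i + b' • β k) := by rw [h1]
        _ = a⁻¹ • β i + (a⁻¹ * b') • β k := by rw [smul_add, smul_smul]
    have hrepr_αi : Bβ.repr (α i) i = a⁻¹ := by
      rw [hαi_expr, ← hBβ, map_add, map_smul, map_smul, Finsupp.add_apply, Finsupp.smul_apply,
        Finsupp.smul_apply, Module.Basis.repr_self_apply, Module.Basis.repr_self_apply, if_pos rfl,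
        if_neg (Ne.symm hik)]
      simp
    rcases hcase2 with h | h
    · obtain ⟨n, hn⟩ := InNatSpan.exists_coeffs hβinj h
      have h1 : Bβ.repr (α i) i = n i := hreprβ _ _ hn i
      rw [hrepr_αi] at h1
      have h2 : (m i : ℝ) * n i = 1 := by
        rw [← ham, ← h1, mul_inv_cancel₀ ha_ne]
      have h3 : m i * n i = 1 := by exact_mod_cast h2
      have h4 : m i = 1 := Nat.eq_one_of_mul_eq_one_right h3
      refine ⟨m k, ?_⟩
      rw [← hab, hbm, ham, h4]
      push_cast
      rw [one_smul]
      exact add_comm _ _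
    · exfalso
      obtain ⟨n, hn⟩ := InNatSpan.exists_coeffs hβinj h
      have h1 : Bβ.repr (-α i) i = n i := hreprβ _ _ hn i
      have h2 : Bβ.repr (-α i) i = -a⁻¹ := by
        rw [map_neg, Finsupp.neg_apply, hrepr_αi]
      rw [h2] at h1
      have h3 : (0:ℝ) ≤ n i := Nat.cast_nonneg _
      have h4 : 0 < a⁻¹ := inv_pos.mpr ha_pos
      linarith
  -- assemble
  have hkey' : ∀ i, ∃ n : ℕ, (i ≠ k → β i = (n : ℝ) • α k + α i) := by
    intro i
    by_cases h : i = k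
    · exact ⟨0, fun hc => absurd h hc⟩
    · obtain ⟨n, hn⟩ := hkey i h
      exact ⟨n, fun _ => hn⟩
  choose N hN using hkey'
  refine ⟨fun i => if i = k then -2 else (N i : ℤ), ?_, ?_, ?_⟩
  · intro i
    dsimp only
    by_cases h : i = k
    · subst h
      rw [if_pos rfl, hcompat₁]
      abel
    · rw [if_neg h, hN i h]
      congr 1
      rw [← Int.cast_smul_eq_zsmul ℝ ((N i : ℤ)) (α k)]
      norm_num
  · simp
  · intro i hik
    dsimp only
    rw [if_neg hik]
    exact Int.natCast_nonneg _
end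
end

section
/- Let (𝒜,T) be a crystallographic Tits arrangement with respect to R and let K be a chamber. Then the Cartan matrix C^K at K is a generalized Cartan matrix: its diagonal entries equal 2, its off-diagonal entries are non-positive integers, and if the (i,j)-entry is 0 for i ≠ j then so is the (j,i)-entry. -/
open Set

noncomputable section

section CartanGraphs

/-- A generalized Cartan matrix. -/
def IsGCM {I : Type*} (C : Matrix I I ℤ) : Prop :=
  (∀ i, C i i = 2) ∧ (∀ i j, i ≠ j → C i j ≤ 0) ∧
    ∀ i j, i ≠ j → C i j = 0 → C j i = 0

variable {I A : Type*} [Fintype I] [DecidableEq I]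

/-- The reflection `σ_i` attached to a generalized Cartan matrix, acting on `ℤ^I`;
on the standard basis it is `σ_i(α_j) = α_j - c_{ij} α_i`. -/
def gcmSigma (C : Matrix I I ℤ) (i : I) : (I → ℤ) → (I → ℤ) :=
  fun v k => v k - if k = i then ∑ j, C i j * v j else 0

/-- `WeylHom ρ C a b f` : `f` is a morphism from `a` to `b` of the Weyl groupoid of the
Cartan graph `(I, A, ρ, C)`, i.e. a composite of maps `σ_i^c ∈ Hom(c, ρ_i(c))`. -/
inductive WeylHom (ρ : I → A → A) (C : A → Matrix I I ℤ) :
    A → A → ((I → ℤ) → (I → ℤ)) → Prop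
  | id (a : A) : WeylHom ρ C a a _root_.id
  | comp {a b : A} {f : (I → ℤ) → (I → ℤ)} (i : I) :
      WeylHom ρ C a b f → WeylHom ρ C a (ρ i b) (gcmSigma (C b) i ∘ f)

/-- The axioms of a Cartan graph: `A` nonempty, all `C^a` generalized Cartan matrices,
(C1) each `ρ_i` an involution, (C2) `c^a_{ij} = c^{ρ_i(a)}_{ij}`. -/
def IsCartanGraph (ρ : I → A → A) (C : A → Matrix I I ℤ) : Prop :=
  Nonempty A ∧ (∀ a, IsGCM (C a)) ∧ (∀ i, Function.Involutive (ρ i)) ∧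
    ∀ a i j, C a i j = C (ρ i a) i j

/-- Connectedness: all Hom-sets of the Weyl groupoid are nonempty. -/
def CGConnected (ρ : I → A → A) (C : A → Matrix I I ℤ) : Prop :=
  ∀ a b : A, ∃ f, WeylHom ρ C a b f

/-- Simple connectedness: `Hom(a,a) = {id}` for every object `a`. -/
def CGSimplyConnected (ρ : I → A → A) (C : A → Matrix I I ℤ) : Prop :=
  ∀ (a : A) (f : (I → ℤ) → (I → ℤ)), WeylHom ρ C a a f → f = _root_.id

/-- The set of real roots at `a`: all images of standard basis vectors under morphisms
into `a`. -/
def realRootsAt (ρ : I → A → A) (C : A → Matrix I I ℤ) (a : A) : Set (I → ℤ) :=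
  {v | ∃ (b : A) (f : (I → ℤ) → (I → ℤ)) (j : I), WeylHom ρ C b a f ∧ v = f (Pi.single j 1)}

/-- A root system of type `𝒞 = (I, A, ρ, C)`: axioms (R1)-(R4). -/
def IsRootSystemOfType (ρ : I → A → A) (C : A → Matrix I I ℤ)
    (R : A → Set (I → ℤ)) : Prop :=
  (∀ a, R a = {v ∈ R a | ∀ i, 0 ≤ v i} ∪ (fun v => -v) '' {v ∈ R a | ∀ i, 0 ≤ v i}) ∧
  (∀ (a : A) (i : I), {v ∈ R a | ∃ n : ℤ, v = n • Pi.single i 1} =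
      {Pi.single i 1, -Pi.single i 1}) ∧
  (∀ (a : A) (i : I), gcmSigma (C a) i '' R a = R (ρ i a)) ∧
  ∀ (a : A) (i j : I), i ≠ j →
    {v ∈ R a | ∃ m n : ℕ, v = (m : ℤ) • Pi.single i 1 + (n : ℤ) • Pi.single j 1}.Finite →
    (ρ i ∘ ρ j)^[{v ∈ R a |
        ∃ m n : ℕ, v = (m : ℤ) • Pi.single i 1 + (n : ℤ) • Pi.single j 1}.ncard] a = a

end CartanGraphs

section Helpers

open Finset in
/-- Sum with two ite coefficients. -/
lemma sum_if_pair {M : Type*} [AddCommGroup M] [Module ℝ M] {r : ℕ}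
    (g : Fin r → M) (i j : Fin r) (a c : ℝ) :
    ∑ k, ((if k = i then a else 0) + (if k = j then c else 0)) • g k = a • g i + c • g j := by
  simp [add_smul, Finset.sum_add_distrib, ite_smul, Finset.sum_ite_eq']

lemma coords_eq {M : Type*} [AddCommGroup M] [Module ℝ M] {r : ℕ}
    {g : Fin r → M} (hLI : LinearIndependent ℝ g) {n m : Fin r → ℝ}
    (h : ∑ k, n k • g k = ∑ k, m k • g k) : ∀ k, n k = m k := by
  have h0 : ∑ k, (n k - m k) • g k = 0 := by
    simp [sub_smul, Finset.sum_sub_distrib, h]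
  have h1 := Fintype.linearIndependent_iff.mp hLI (fun k => n k - m k) h0
  intro k
  have h2 : n k - m k = 0 := h1 k
  linarith

/-- If `δ` has a nonnegative integral representation in terms of a linearly independent
family `g`, then the coefficients of any representation of `δ` are nonnegative. -/
lemma natspan_coords_nonneg {r : ℕ} {g : Fin r → Module.Dual ℝ (Vr r)}
    (hLI : LinearIndependent ℝ g) (hinj : Function.Injective g)
    {δ : Module.Dual ℝ (Vr r)} (hδ : InNatSpan (Set.range g) δ)
    {m : Fin r → ℝ} (hm : δ = ∑ k, m k • g k) : ∀ k, 0 ≤ m k := by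
  classical
  obtain ⟨s, c, hs, hsum⟩ := hδ
  set n : Fin r → ℝ := fun k => if g k ∈ s then (c (g k) : ℝ) else 0 with hn
  have h1 : ∑ γ ∈ s, (c γ : ℝ) • γ = ∑ k, n k • g k := by
    have h2 : ∑ k, n k • g k = ∑ k ∈ Finset.univ.filter (fun k => g k ∈ s), (c (g k) : ℝ) • g k := by
      rw [Finset.sum_filter]
      refine Finset.sum_congr rfl fun k _ => ?_
      by_cases hk : g k ∈ s <;> simp [hn, hk]
    rw [h2]
    refine (Finset.sum_bij (fun k _ => g k) ?_ ?_ ?_ ?_).symm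
    · intro k hk; exact (Finset.mem_filter.mp hk).2
    · intro k₁ h₁ k₂ h₂ h; exact hinj h
    · intro γ hγ
      obtain ⟨k, hk⟩ := hs hγ
      exact ⟨k, Finset.mem_filter.mpr ⟨Finset.mem_univ k, hk ▸ hγ⟩, hk⟩
    · intro k hk; rfl
  have hnm := coords_eq hLI (hm ▸ (hsum.trans h1)).symm
  intro k
  rw [← hnm k]
  by_cases hk : g k ∈ s <;> simp [hn, hk]

/-- The indexed root basis of a chamber of a Tits arrangement is linearly independent. -/
lemma rootBasis_linearIndependent {r : ℕ} {𝒜 : Set (Set (Vr r))} {T : Set (Vr r)}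
    {R : Set (Module.Dual ℝ (Vr r))}
    (hTits : IsTitsArrangement 𝒜 T) (hR : IsAssociatedRootSystem 𝒜 R)
    {K : Set (Vr r)} (hK : K ∈ chambersOf 𝒜 T)
    {α : Fin r → Module.Dual ℝ (Vr r)}
    (hαinj : Function.Injective α) (hαran : Set.range α = rootBasisOf R K) :
    LinearIndependent ℝ α := by
  classical
  obtain ⟨b0, hKb0⟩ := hTits.simplicial K hK
  have hfr : Module.finrank ℝ (Vr r) = r := Module.finrank_fin_fun ℝ
  set b : Module.Basis (Fin r) ℝ (Module.Dual ℝ (Vr r)) := b0.reindex (finCongr hfr) with hb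
  have hKb : K = {v | ∀ i : Fin r, 0 < b i v} := by
    rw [hKb0]; ext v
    constructor
    · intro h i; simpa [hb] using h ((finCongr hfr).symm i)
    · intro h i; simpa [hb] using h (finCongr hfr i)
  -- the coordinate map
  set φ : Vr r →ₗ[ℝ] (Fin r → ℝ) := LinearMap.pi (fun i => b i) with hφ
  have hφapp : ∀ v i, φ v i = b i v := fun v i => rfl
  have hφinj : Function.Injective φ := by
    rw [← LinearMap.ker_eq_bot, LinearMap.ker_eq_bot']
    intro v hv
    have hv' : ∀ i, b i v = 0 := fun i => congrFun hv i
    rw [← Module.forall_dual_apply_eq_zero_iff ℝ v]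
    intro f
    have hf : f ∈ Submodule.span ℝ (Set.range b) := by rw [b.span_eq]; trivial
    induction hf using Submodule.span_induction with
    | mem f hfm => obtain ⟨i, rfl⟩ := hfm; exact hv' i
    | zero => simp
    | add f g _ _ hf hg => simp [hf, hg]
    | smul c f _ hf => simp [hf]
  have hφbij : Function.Bijective φ := ⟨hφinj, LinearMap.injective_iff_surjective.mp hφinj⟩
  set ψ : Vr r ≃ₗ[ℝ] (Fin r → ℝ) := LinearEquiv.ofBijective φ hφbij with hψ
  have hψapp : ∀ v, ψ v = φ v := fun v => rfl
  set e : Fin r → Vr r := fun j => ψ.symm (Pi.single j 1) with he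
  have hbe : ∀ i j, b i (e j) = if i = j then 1 else 0 := by
    intro i j
    have : ψ (e j) = Pi.single j 1 := ψ.apply_symm_apply _
    have h2 : φ (e j) i = (Pi.single j 1 : Fin r → ℝ) i := by rw [← hψapp, this]
    rw [← hφapp, h2, Pi.single_apply]
  set u : Vr r := ψ.symm (fun _ => 1) with hu
  have hbu : ∀ i, b i u = 1 := by
    intro i
    have : ψ u = fun _ => 1 := ψ.apply_symm_apply _
    have h2 : φ u i = 1 := by rw [← hψapp]; rw [this]
    rw [← hφapp, h2]
  have huK : u ∈ K := by rw [hKb]; intro i; rw [hbu]; norm_num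
  have hrepr : ∀ v : Vr r, v = ∑ j, b j v • e j := by
    intro v
    apply hφinj
    ext i
    rw [map_sum]
    simp only [map_smul]
    simp [hφapp, hbe, mul_ite, Finset.sum_ite_eq]
  have hclos : closure K ⊆ {v | ∀ i, 0 ≤ b i v} := by
    apply closure_minimal
    · rw [hKb]; intro v hv i; exact (hv i).le
    · have : {v : Vr r | ∀ i, 0 ≤ b i v} = ⋂ i, (fun v => b i v) ⁻¹' (Set.Ici 0) := by
        ext v; simp [Set.mem_iInter]
      rw [this]
      exact isClosed_iInter fun i =>
        IsClosed.preimage (b i).continuous_of_finiteDimensional isClosed_Ici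
  have hecl : ∀ j, e j ∈ closure K := by
    intro j
    have hcont : Continuous fun ε : ℝ => e j + ε • u :=
      continuous_const.add (continuous_id.smul continuous_const)
    have htt : Filter.Tendsto (fun ε : ℝ => e j + ε • u) (nhdsWithin 0 (Set.Ioi 0)) (nhds (e j)) := by
      have h0 := hcont.tendsto 0
      simp only [zero_smul, add_zero] at h0
      exact h0.mono_left nhdsWithin_le_nhds
    refine mem_closure_of_tendsto htt ?_
    filter_upwards [self_mem_nhdsWithin] with ε hε
    have hε' : (0:ℝ) < ε := hε
    rw [hKb]
    intro i
    have : b i (e j + ε • u) = (if i = j then 1 else 0) + ε := by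
      rw [map_add, map_smul, hbe, hbu, smul_eq_mul, mul_one]
    show 0 < b i (e j + ε • u)
    rw [this]
    by_cases hij : i = j <;> simp [hij] <;> linarith
  -- classification of root basis elements
  have classify : ∀ γ ∈ rootBasisOf R K, ∃ m : Fin r, ∃ d : ℝ, 0 < d ∧ γ = d • b m := by
    rintro γ ⟨hγR, hγwall, hγpos⟩
    set d : Fin r → ℝ := fun j => γ (e j) with hd
    have hclγ : closure K ⊆ {v | 0 ≤ γ v} := by
      apply closure_minimal
      · intro v hv; exact (hγpos v hv).le
      · exact IsClosed.preimage γ.continuous_of_finiteDimensional isClosed_Ici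
    have hd0 : ∀ j, 0 ≤ d j := fun j => hclγ (hecl j)
    have hγsum : ∀ v, γ v = ∑ j, b j v * d j := by
      intro v
      conv_lhs => rw [hrepr v]
      rw [map_sum]
      simp [smul_eq_mul, hd]
    have hpos : ∃ m, 0 < d m := by
      by_contra h
      push_neg at h
      have hdz : ∀ j, d j = 0 := fun j => le_antisymm (h j) (hd0 j)
      have h1 : γ u = 0 := by rw [hγsum]; simp [hdz]
      have h2 : 0 < γ u := hγpos u huK
      linarith
    obtain ⟨m, hm⟩ := hpos
    have hz : ∀ l, l ≠ m → d l = 0 := by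
      intro l hlm
      by_contra hdl'
      have hdl : 0 < d l := lt_of_le_of_ne (hd0 l) (Ne.symm hdl')
      have hsub : dualKer γ ∩ closure K ⊆ {v | b m v = 0} := by
        rintro v ⟨hv1, hv2⟩
        have h0 : ∑ j, b j v * d j = 0 := by rw [← hγsum]; exact hv1
        have hnn : ∀ j ∈ Finset.univ, 0 ≤ b j v * d j :=
          fun j _ => mul_nonneg (hclos hv2 j) (hd0 j)
        have := (Finset.sum_eq_zero_iff_of_nonneg hnn).mp h0 m (Finset.mem_univ m)
        exact (mul_eq_zero.mp this).resolve_right (ne_of_gt hm)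
      have hspan : (Submodule.span ℝ (dualKer γ ∩ closure K) : Set (Vr r)) ⊆ {v | b m v = 0} := by
        intro v hv
        have hle : Submodule.span ℝ (dualKer γ ∩ closure K) ≤ LinearMap.ker (b m) :=
          Submodule.span_le.mpr (fun x hx => hsub hx)
        exact hle hv
      set w : Vr r := d l • e m - d m • e l with hw
      have hwker : w ∈ dualKer γ := by
        show γ w = 0
        rw [hw]
        simp only [map_sub, map_smul, smul_eq_mul]
        have h1 : γ (e m) = d m := rfl
        have h2 : γ (e l) = d l := rfl
        rw [h1, h2]; ring
      have hwspan : w ∈ (Submodule.span ℝ (dualKer γ ∩ closure K) : Set (Vr r)) := by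
        rw [hγwall.2.2]; exact hwker
      have hbw : b m w = 0 := hspan hwspan
      have hbm : b m w = d l := by
        rw [hw]
        simp [hbe, Ne.symm hlm]
      exact hdl' (hbm.symm.trans hbw)
    refine ⟨m, d m, hm, ?_⟩
    apply LinearMap.ext
    intro v
    rw [hγsum v]
    rw [Finset.sum_eq_single m]
    · simp [smul_eq_mul]; ring
    · intro l _ hlm; rw [hz l hlm, mul_zero]
    · intro h; exact absurd (Finset.mem_univ m) h
  -- each ker (b i) is a wall of K
  have hKwall : ∀ i, IsWall K (dualKer (b i)) := by
    intro i
    refine ⟨⟨b i, b.ne_zero i, rfl⟩, ?_, ?_⟩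
    · rw [Set.eq_empty_iff_forall_notMem]
      rintro v ⟨hv1, hv2⟩
      rw [hKb] at hv2
      have := hv2 i
      have hv1' : b i v = 0 := hv1
      linarith
    · apply subset_antisymm
      · intro v hv
        have hle : Submodule.span ℝ (dualKer (b i) ∩ closure K) ≤ LinearMap.ker (b i) :=
          Submodule.span_le.mpr (fun x hx => hx.1)
        exact hle hv
      · intro v hv
        have hv' : b i v = 0 := hv
        show v ∈ Submodule.span ℝ (dualKer (b i) ∩ closure K)
        rw [hrepr v]
        apply Submodule.sum_mem
        intro j _
        by_cases hji : j = i
        · subst hji; rw [hv', zero_smul]; exact Submodule.zero_mem _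
        · refine Submodule.smul_mem _ _ (Submodule.subset_span ⟨?_, hecl j⟩)
          show b i (e j) = 0
          rw [hbe, if_neg (fun h => hji h.symm)]
  -- each wall carries a root-basis element
  have wallroot : ∀ i, ∃ γ ∈ rootBasisOf R K, dualKer γ = dualKer (b i) := by
    intro i
    have hA : dualKer (b i) ∈ 𝒜 := hTits.thin K hK _ (hKwall i)
    rw [hR.2.2] at hA
    obtain ⟨γ, hγR, hγk⟩ := hA
    have hnz : ∀ x ∈ K, γ x ≠ 0 := by
      intro x hx h0
      have : x ∈ dualKer γ := h0
      rw [← hγk] at this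
      have : b i x = 0 := this
      rw [hKb] at hx
      have := hx i
      linarith
    have hpre : IsPreconnected K := by
      obtain ⟨x, hx, hKeq⟩ := hK
      rw [hKeq]
      exact isPreconnected_connectedComponentIn
    have himg : IsPreconnected (γ '' K) :=
      hpre.image γ γ.continuous_of_finiteDimensional.continuousOn
    have hsub : γ '' K ⊆ Set.Iio 0 ∪ Set.Ioi 0 := by
      rintro y ⟨v, hv, rfl⟩
      rcases lt_trichotomy (γ v) 0 with h | h | h
      · exact Or.inl h
      · exact absurd h (hnz v hv)
      · exact Or.inr h
    have hdisj : Disjoint (Set.Iio (0:ℝ)) (Set.Ioi 0) := by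
      rw [Set.disjoint_left]; intro a ha hb
      simp only [Set.mem_Iio] at ha
      simp only [Set.mem_Ioi] at hb
      linarith
    rcases himg.subset_or_subset isOpen_Iio isOpen_Ioi hdisj hsub with h | h
    · refine ⟨-γ, ⟨hR.2.1 γ hγR, ?_, fun x hx => by
        have := h ⟨x, hx, rfl⟩
        simpa using this⟩, ?_⟩
      · have hkeq : dualKer (-γ) = dualKer γ := by
          ext v; simp [dualKer]
        rw [hkeq, ← hγk]
        exact hKwall i
      · have hkeq : dualKer (-γ) = dualKer γ := by
          ext v; simp [dualKer]
        rw [hkeq, hγk]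
    · refine ⟨γ, ⟨hγR, by rw [← hγk]; exact hKwall i, fun x hx => h ⟨x, hx, rfl⟩⟩, hγk.symm⟩
  -- choose for each k the wall index
  have hcls : ∀ k, ∃ m : Fin r, ∃ d : ℝ, 0 < d ∧ α k = d • b m := by
    intro k
    exact classify (α k) (by rw [← hαran]; exact Set.mem_range_self k)
  choose σ dd hdd hαeq using hcls
  have hσsurj : Function.Surjective σ := by
    intro i
    obtain ⟨γ, hγmem, hγker⟩ := wallroot i
    obtain ⟨k, hk⟩ : ∃ k, α k = γ := by rw [← hαran] at hγmem; exact hγmem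
    refine ⟨k, ?_⟩
    have h1 : γ (e i) ≠ 0 := by
      intro h
      have h2 : e i ∈ dualKer γ := h
      rw [hγker] at h2
      have h3 : b i (e i) = 0 := h2
      rw [hbe, if_pos rfl] at h3
      norm_num at h3
    have h2 : dd k * b (σ k) (e i) ≠ 0 := by
      rw [← hk] at h1
      rw [hαeq k] at h1
      exact h1
    have h3 : b (σ k) (e i) ≠ 0 := fun h => h2 (by rw [h, mul_zero])
    by_contra hne
    rw [hbe, if_neg hne] at h3
    exact h3 rfl
  have hσinj : Function.Injective σ := Finite.injective_iff_surjective.mpr hσsurj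
  have hbLI : LinearIndependent ℝ (b ∘ σ) := b.linearIndependent.comp σ hσinj
  set w : Fin r → ℝˣ := fun k => Units.mk0 (dd k) (ne_of_gt (hdd k)) with hwdef
  have hLI := hbLI.units_smul w
  have hαw : α = w • (b ∘ σ) := by
    funext k
    rw [hαeq k]
    rfl
  rw [hαw]
  exact hLI

end Helpers

/-- the Cartan matrix at a chamber is a generalized Cartan matrix:
let `(𝒜,T)` be a crystallographic Tits arrangement with respect to `R`, `K` a chamber
with indexed root basis `α`, and for each `i` let `Kadj i` be the chamber `i`-adjacent
to `K` with compatibly indexed root basis `β i` (so `β i i = -α i` and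
`β i j ∈ ⟨α j, α i⟩`).  If `C` is the Cartan matrix at `K`, i.e.
`β i j = α j - C i j • α i` for all `i, j`, then `C` is a generalized Cartan matrix. -/
theorem statement_2 {r : ℕ} (𝒜 : Set (Set (Vr r))) (T : Set (Vr r))
    (R : Set (Module.Dual ℝ (Vr r)))
    (hTits : IsTitsArrangement 𝒜 T) (hR : IsAssociatedRootSystem 𝒜 R)
    (hcrys : IsCrystallographic 𝒜 T R)
    (K : Set (Vr r)) (hK : K ∈ chambersOf 𝒜 T)
    (α : Fin r → Module.Dual ℝ (Vr r))
    (hαinj : Function.Injective α) (hαran : Set.range α = rootBasisOf R K)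
    (Kadj : Fin r → Set (Vr r)) (hKadj : ∀ i, Kadj i ∈ chambersOf 𝒜 T)
    (hKadjne : ∀ i, Kadj i ≠ K)
    (β : Fin r → Fin r → Module.Dual ℝ (Vr r))
    (hβinj : ∀ i, Function.Injective (β i))
    (hβran : ∀ i, Set.range (β i) = rootBasisOf R (Kadj i))
    (hadj : ∀ i, (Submodule.span ℝ (closure K ∩ closure (Kadj i)) : Set (Vr r)) =
      dualKer (α i))
    (hcompat₁ : ∀ i, β i i = -α i)
    (hcompat₂ : ∀ i j, β i j ∈ Submodule.span ℝ {α j, α i})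
    (C : Matrix (Fin r) (Fin r) ℤ)
    (hC : ∀ i j, β i j = α j - C i j • α i) :
    IsGCM C := by
  classical
  have hLIα : LinearIndependent ℝ α := rootBasis_linearIndependent hTits hR hK hαinj hαran
  have hLIβ : ∀ i, LinearIndependent ℝ (β i) := fun i =>
    rootBasis_linearIndependent hTits hR (hKadj i) (hβinj i) (hβran i)
  have hβR : ∀ i j, β i j ∈ R := by
    intro i j
    have : β i j ∈ rootBasisOf R (Kadj i) := by rw [← hβran i]; exact Set.mem_range_self j
    exact this.1
  have hcast : ∀ (z : ℤ) (x : Module.Dual ℝ (Vr r)), z • x = (z : ℝ) • x :=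
    fun z x => (Int.cast_smul_eq_zsmul ℝ z x).symm
  -- off-diagonal entries are nonpositive
  have key : ∀ i j, i ≠ j → C i j ≤ 0 := by
    intro i j hij
    rcases hcrys K hK (β i j) (hβR i j) with hp | hn
    · have hp' : InNatSpan (Set.range α) (β i j) := by rw [hαran]; exact hp
      have hrep : β i j =
          ∑ k, ((if k = i then -(C i j : ℝ) else 0) + (if k = j then 1 else 0)) • α k := by
        rw [sum_if_pair α i j (-(C i j : ℝ)) 1, hC i j, hcast]
        module
      have hnn := natspan_coords_nonneg hLIα hαinj hp' hrep i
      have h5 : (0:ℝ) ≤ -(C i j : ℝ) := by simpa [hij] using hnn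
      have : (C i j : ℝ) ≤ 0 := by linarith
      exact_mod_cast this
    · have hn' : InNatSpan (Set.range α) (-(β i j)) := by rw [hαran]; exact hn
      have hrep : -(β i j) =
          ∑ k, ((if k = i then (C i j : ℝ) else 0) + (if k = j then -1 else 0)) • α k := by
        rw [sum_if_pair α i j ((C i j : ℝ)) (-1), hC i j, hcast]
        module
      have hnn := natspan_coords_nonneg hLIα hαinj hn' hrep j
      have h5 : (0:ℝ) ≤ -1 := by simpa [Ne.symm hij] using hnn
      linarith
  refine ⟨?_, key, ?_⟩
  · -- diagonal entries equal 2
    intro i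
    have h1 := hC i i
    rw [hcompat₁ i, hcast] at h1
    have hne : α i ≠ 0 := hLIα.ne_zero i
    obtain ⟨v, hv⟩ : ∃ v, α i v ≠ 0 := by
      by_contra h
      push_neg at h
      exact hne (LinearMap.ext h)
    have h2 := congrArg (fun f : Module.Dual ℝ (Vr r) => f v) h1
    simp only [LinearMap.neg_apply, LinearMap.sub_apply, LinearMap.smul_apply,
      smul_eq_mul] at h2
    have h3 : (C i i : ℝ) * α i v = 2 * α i v := by linarith
    have h4 : (C i i : ℝ) = 2 := mul_right_cancel₀ hv h3
    exact_mod_cast h4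
  · -- symmetry of vanishing
    intro i j hij h0
    have h2 : C j i ≤ 0 := key j i (Ne.symm hij)
    have h3 : 0 ≤ C j i := by
      have hβii : β i i = -α i := hcompat₁ i
      have hβij : β i j = α j := by rw [hC i j, h0]; simp
      rcases hcrys (Kadj i) (hKadj i) (β j i) (hβR j i) with hp | hn
      · have hp' : InNatSpan (Set.range (β i)) (β j i) := by rw [hβran i]; exact hp
        have hrep : β j i =
            ∑ k, ((if k = i then -1 else 0) + (if k = j then -(C j i : ℝ) else 0)) • β i k := by
          rw [sum_if_pair (β i) i j (-1) (-(C j i : ℝ)), hβii, hβij, hC j i, hcast]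
          module
        have hnn := natspan_coords_nonneg (hLIβ i) (hβinj i) hp' hrep i
        have h5 : (0:ℝ) ≤ -1 := by simpa [hij] using hnn
        linarith
      · have hn' : InNatSpan (Set.range (β i)) (-(β j i)) := by rw [hβran i]; exact hn
        have hrep : -(β j i) =
            ∑ k, ((if k = i then 1 else 0) + (if k = j then (C j i : ℝ) else 0)) • β i k := by
          rw [sum_if_pair (β i) i j 1 ((C j i : ℝ)), hβii, hβij, hC j i, hcast]
          module
        have hnn := natspan_coords_nonneg (hLIβ i) (hβinj i) hn' hrep j
        have h5 : (0:ℝ) ≤ (C j i : ℝ) := by simpa [Ne.symm hij] using hnn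
        exact_mod_cast h5
    omega
end
end

section
/- Let 𝒞 be a connected simply connected Cartan graph whose real roots form a root system of type 𝒞, fix a ∈ A, and form the geometric realization data ψ, R = ψ((R^re)^a), 𝒜, and the cones K^b for b ∈ A. Then for every b ∈ A, the set K^b is an open simplicial cone, and no hyperplane H ∈ 𝒜 meets K^b. -/
open Set

noncomputable section

section GeometricRealization

variable {r : ℕ} {A : Type*}

/-- The map `ψ : ℤ^r → V*` determined by a basis `(β_i)` of `V*`: `ψ(α_i) = β_i`. -/
def psiMap (bβ : Module.Basis (Fin r) ℝ (Module.Dual ℝ (Vr r))) (v : Fin r → ℤ) :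
    Module.Dual ℝ (Vr r) :=
  ∑ i, (v i : ℝ) • bβ i

/-- The open cone `K^b` attached to the (unique) morphism `u ∈ Hom(b,a)`:
`K^b = ⋂_i ψ_b(α_i)^+` where `ψ_b(α_i) = ψ(u(α_i))`. -/
def Kch (bβ : Module.Basis (Fin r) ℝ (Module.Dual ℝ (Vr r)))
    (u : (Fin r → ℤ) → (Fin r → ℤ)) : Set (Vr r) :=
  {x | ∀ i : Fin r, 0 < psiMap bβ (u (Pi.single i 1)) x}

/-- The root system `R = ψ((R^re)^a)` of the geometric realization. -/
def geoR (ρ : Fin r → A → A) (C : A → Matrix (Fin r) (Fin r) ℤ) (a : A)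
    (bβ : Module.Basis (Fin r) ℝ (Module.Dual ℝ (Vr r))) : Set (Module.Dual ℝ (Vr r)) :=
  psiMap bβ '' realRootsAt ρ C a

/-- The arrangement `𝒜 = {ker α | α ∈ R}` of the geometric realization. -/
def geoA (ρ : Fin r → A → A) (C : A → Matrix (Fin r) (Fin r) ℤ) (a : A)
    (bβ : Module.Basis (Fin r) ℝ (Module.Dual ℝ (Vr r))) : Set (Set (Vr r)) :=
  {H | ∃ α ∈ geoR ρ C a bβ, H = dualKer α}

/-- Adjacency of objects `b, c` of the Cartan graph: the corresponding chambers `K^b`, `K^c`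
are distinct and the span of `cl(K^b) ∩ cl(K^c)` is the wall `ker ψ_b(α_i)` for some `i`. -/
def objAdj (ρ : Fin r → A → A) (C : A → Matrix (Fin r) (Fin r) ℤ) (a : A)
    (bβ : Module.Basis (Fin r) ℝ (Module.Dual ℝ (Vr r))) (b c : A) : Prop :=
  ∃ u u' : (Fin r → ℤ) → (Fin r → ℤ), WeylHom ρ C b a u ∧ WeylHom ρ C c a u' ∧
    ∃ i : Fin r, Kch bβ u ≠ Kch bβ u' ∧
      (Submodule.span ℝ (closure (Kch bβ u) ∩ closure (Kch bβ u')) : Set (Vr r)) =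
        dualKer (psiMap bβ (u (Pi.single i 1)))

/-- The gallery distance between the chambers `K^b` and `K^{b'}`: the minimal length of a
gallery from `K^b` to `K^{b'}`. -/
def galleryDist (ρ : Fin r → A → A) (C : A → Matrix (Fin r) (Fin r) ℤ) (a : A)
    (bβ : Module.Basis (Fin r) ℝ (Module.Dual ℝ (Vr r))) (b b' : A) : ℕ :=
  sInf {m : ℕ | ∃ g : ℕ → A, g 0 = b ∧ g m = b' ∧
    ∀ k < m, objAdj ρ C a bβ (g k) (g (k + 1))}

end GeometricRealization

section AuxProof

variable {r : ℕ} {A : Type*}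

lemma gcmSigma_add (C : Matrix (Fin r) (Fin r) ℤ) (i : Fin r) (v w : Fin r → ℤ) :
    gcmSigma C i (v + w) = gcmSigma C i v + gcmSigma C i w := by
  funext k
  simp only [gcmSigma, Pi.add_apply, mul_add, Finset.sum_add_distrib]
  split <;> ring

lemma gcmSigma_smul (C : Matrix (Fin r) (Fin r) ℤ) (i : Fin r) (c : ℤ) (v : Fin r → ℤ) :
    gcmSigma C i (c • v) = c • gcmSigma C i v := by
  funext k
  simp only [gcmSigma, Pi.smul_apply, smul_eq_mul]
  split
  · rw [mul_sub, Finset.mul_sum]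
    congr 1
    exact Finset.sum_congr rfl fun j _ => by ring
  · ring

lemma gcmSigma_row_eq {C C' : Matrix (Fin r) (Fin r) ℤ} (i : Fin r)
    (h : ∀ j, C i j = C' i j) : gcmSigma C i = gcmSigma C' i := by
  funext v k
  simp only [gcmSigma, h]

lemma gcmSigma_invol (C : Matrix (Fin r) (Fin r) ℤ) (i : Fin r) (hC : C i i = 2)
    (v : Fin r → ℤ) : gcmSigma C i (gcmSigma C i v) = v := by
  funext k
  simp only [gcmSigma]
  by_cases hk : k = i
  · subst hk
    simp only [if_pos rfl, mul_sub, mul_ite, mul_zero, Finset.sum_sub_distrib,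
      Finset.sum_ite_eq' Finset.univ, Finset.mem_univ, if_true, hC]
    ring
  · simp [hk]

lemma WeylHom.trans' {ρ : Fin r → A → A} {C : A → Matrix (Fin r) (Fin r) ℤ}
    {a b c : A} {f g : (Fin r → ℤ) → (Fin r → ℤ)}
    (hf : WeylHom ρ C a b f) (hg : WeylHom ρ C b c g) :
    WeylHom ρ C a c (g ∘ f) := by
  induction hg with
  | id => exact hf
  | @comp e h i hh ih => exact WeylHom.comp i ih

lemma WeylHom.exists_inv {ρ : Fin r → A → A} {C : A → Matrix (Fin r) (Fin r) ℤ}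
    (hCG : IsCartanGraph ρ C) {b a : A} {u : (Fin r → ℤ) → (Fin r → ℤ)}
    (hu : WeylHom ρ C b a u) :
    ∃ g, WeylHom ρ C a b g ∧ u ∘ g = _root_.id ∧ g ∘ u = _root_.id := by
  induction hu with
  | id => exact ⟨_root_.id, WeylHom.id b, rfl, rfl⟩
  | @comp c f i hf ih =>
    obtain ⟨g, hg, hug, hgu⟩ := ih
    have hrow : gcmSigma (C c) i = gcmSigma (C (ρ i c)) i :=
      gcmSigma_row_eq i (fun j => hCG.2.2.2 c i j)
    have hinv : ∀ v, gcmSigma (C c) i (gcmSigma (C c) i v) = v :=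
      gcmSigma_invol (C c) i ((hCG.2.1 c).1 i)
    refine ⟨g ∘ gcmSigma (C (ρ i c)) i, ?_, ?_, ?_⟩
    · have h1 : WeylHom ρ C (ρ i c) (ρ i (ρ i c)) (gcmSigma (C (ρ i c)) i ∘ _root_.id) :=
        WeylHom.comp i (WeylHom.id (ρ i c))
      rw [hCG.2.2.1 i c] at h1
      exact h1.trans' hg
    · funext v
      have : f (g (gcmSigma (C (ρ i c)) i v)) = gcmSigma (C (ρ i c)) i v :=
        congrFun hug (gcmSigma (C (ρ i c)) i v)
      simp only [Function.comp_apply, this, id_eq]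
      rw [← hrow]
      exact hinv v
    · funext v
      simp only [Function.comp_apply, id_eq, ← hrow, hinv]
      exact congrFun hgu v

lemma WeylHom.map_add {ρ : Fin r → A → A} {C : A → Matrix (Fin r) (Fin r) ℤ}
    {b a : A} {u : (Fin r → ℤ) → (Fin r → ℤ)} (hu : WeylHom ρ C b a u)
    (v w : Fin r → ℤ) : u (v + w) = u v + u w := by
  induction hu with
  | id => rfl
  | @comp c f i hf ih => simp only [Function.comp_apply, ih, gcmSigma_add]

lemma WeylHom.map_smul {ρ : Fin r → A → A} {C : A → Matrix (Fin r) (Fin r) ℤ}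
    {b a : A} {u : (Fin r → ℤ) → (Fin r → ℤ)} (hu : WeylHom ρ C b a u)
    (c : ℤ) (v : Fin r → ℤ) : u (c • v) = c • u v := by
  induction hu with
  | id => rfl
  | @comp c f i hf ih => simp only [Function.comp_apply, ih, gcmSigma_smul]

lemma WeylHom.apply_eq_sum {ρ : Fin r → A → A} {C : A → Matrix (Fin r) (Fin r) ℤ}
    {b a : A} {u : (Fin r → ℤ) → (Fin r → ℤ)} (hu : WeylHom ρ C b a u)
    (v : Fin r → ℤ) : u v = ∑ i, v i • u (Pi.single i 1) := by
  have hv : v = ∑ i, v i • (Pi.single i 1 : Fin r → ℤ) := by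
    funext j
    rw [Finset.sum_apply]
    simp [Pi.single_apply, mul_ite, Finset.sum_ite_eq]
  calc u v = u (∑ i, v i • (Pi.single i 1 : Fin r → ℤ)) := by rw [← hv]
    _ = ∑ i, u (v i • (Pi.single i 1 : Fin r → ℤ)) :=
        map_sum (AddMonoidHom.mk' u hu.map_add) _ _
    _ = ∑ i, v i • u (Pi.single i 1) := by
        refine Finset.sum_congr rfl fun i _ => hu.map_smul (v i) _

lemma psiMap_sum_smul (bβ : Module.Basis (Fin r) ℝ (Module.Dual ℝ (Vr r)))
    (c : Fin r → ℤ) (w : Fin r → (Fin r → ℤ)) :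
    psiMap bβ (∑ i, c i • w i) = ∑ i, (c i : ℝ) • psiMap bβ (w i) := by
  simp only [psiMap, Finset.smul_sum, smul_smul]
  rw [Finset.sum_comm]
  refine Finset.sum_congr rfl fun j _ => ?_
  rw [← Finset.sum_smul]
  congr 1
  rw [Finset.sum_apply]
  push_cast [Pi.smul_apply, smul_eq_mul]
  rfl

lemma psiMap_single (bβ : Module.Basis (Fin r) ℝ (Module.Dual ℝ (Vr r))) (j : Fin r) :
    psiMap bβ (Pi.single j 1) = bβ j := by
  simp only [psiMap]
  rw [Finset.sum_eq_single j]
  · simp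
  · intro i _ hij
    simp [Pi.single_apply, hij]
  · simp

lemma psiMap_weyl (bβ : Module.Basis (Fin r) ℝ (Module.Dual ℝ (Vr r)))
    {ρ : Fin r → A → A} {C : A → Matrix (Fin r) (Fin r) ℤ}
    {b a : A} {u : (Fin r → ℤ) → (Fin r → ℤ)} (hu : WeylHom ρ C b a u)
    (w : Fin r → ℤ) :
    psiMap bβ (u w) = ∑ i, (w i : ℝ) • psiMap bβ (u (Pi.single i 1)) := by
  rw [hu.apply_eq_sum w, psiMap_sum_smul]

lemma zero_not_mem_realRoots {ρ : Fin r → A → A} {C : A → Matrix (Fin r) (Fin r) ℤ}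
    (hRS : IsRootSystemOfType ρ C (realRootsAt ρ C)) (b : A) (j : Fin r) :
    (0 : Fin r → ℤ) ∉ realRootsAt ρ C b := by
  intro h0
  have h2 := hRS.2.1 b j
  have : (0 : Fin r → ℤ) ∈ {v ∈ realRootsAt ρ C b | ∃ n : ℤ, v = n • Pi.single j 1} :=
    ⟨h0, 0, by simp⟩
  rw [h2] at this
  rcases this with h | h
  · have := congrFun h j
    simp at this
  · have := congrFun h j
    simp at this

end AuxProof

/-- in the geometric realization of a connected simply connected Cartan
graph `𝒞` whose real roots form a root system of type `𝒞`, for every `b ∈ A` (with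
`{u} = Hom(b,a)`) the set `K^b` is an open simplicial cone, and no hyperplane `H ∈ 𝒜`
meets `K^b`. -/
theorem statement_8 {r : ℕ} {A : Type*}
    (ρ : Fin r → A → A) (C : A → Matrix (Fin r) (Fin r) ℤ)
    (hCG : IsCartanGraph ρ C) (hconn : CGConnected ρ C) (hsc : CGSimplyConnected ρ C)
    (hRS : IsRootSystemOfType ρ C (realRootsAt ρ C))
    (a : A) (bβ : Module.Basis (Fin r) ℝ (Module.Dual ℝ (Vr r)))
    (b : A) (u : (Fin r → ℤ) → (Fin r → ℤ)) (hu : WeylHom ρ C b a u) :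
    IsOpenSimplicialCone (Kch bβ u) ∧
    ∀ H ∈ geoA ρ C a bβ, H ∩ Kch bβ u = ∅ := by
  obtain ⟨g, hg, hug, hgu⟩ := hu.exists_inv hCG
  set c : Fin r → Module.Dual ℝ (Vr r) := fun i => psiMap bβ (u (Pi.single i 1)) with hc
  -- the family `c` spans the dual space
  have hspan : ⊤ ≤ Submodule.span ℝ (Set.range c) := by
    rw [← bβ.span_eq]
    refine Submodule.span_le.2 ?_
    rintro - ⟨j, rfl⟩
    have h1 : u (g (Pi.single j 1)) = Pi.single j 1 := congrFun hug _
    have h2 : bβ j = psiMap bβ (u (g (Pi.single j 1))) := by rw [h1, psiMap_single]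
    have h3 : bβ j = ∑ i, ((g (Pi.single j 1)) i : ℝ) • c i := by
      rw [h2, psiMap_weyl bβ hu]
    rw [h3]
    exact Submodule.sum_mem _ fun i _ =>
      Submodule.smul_mem _ _ (Submodule.subset_span ⟨i, rfl⟩)
  have hcard : Fintype.card (Fin r) = Module.finrank ℝ (Module.Dual ℝ (Vr r)) := by
    rw [Module.finrank_eq_card_basis bβ]
  set B : Module.Basis (Fin r) ℝ (Module.Dual ℝ (Vr r)) :=
    basisOfTopLeSpanOfCardEqFinrank c hspan hcard with hB
  have hBc : ⇑B = c := coe_basisOfTopLeSpanOfCardEqFinrank c hspan hcard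
  have hfr : Module.finrank ℝ (Vr r) = r := Module.finrank_fin_fun ℝ
  constructor
  · refine ⟨B.reindex (finCongr hfr.symm), ?_⟩
    ext x
    simp only [Kch, Set.mem_setOf_eq, Module.Basis.reindex_apply, hBc]
    constructor
    · intro h i
      exact h _
    · intro h i
      have := h (finCongr hfr.symm i)
      simpa using this
  · rintro H ⟨α, ⟨v, hv, rfl⟩, rfl⟩
    obtain ⟨c', f, j, hf, hvf⟩ := hv
    -- pull back the root to object b
    have hgf : WeylHom ρ C c' b (g ∘ f) := hf.trans' hg
    have hwmem : g v ∈ realRootsAt ρ C b := ⟨c', g ∘ f, j, hgf, by rw [hvf]; rfl⟩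
    have hwne : g v ≠ 0 := fun h => zero_not_mem_realRoots hRS b j (h ▸ hwmem)
    have hval : psiMap bβ v = ∑ i, ((g v) i : ℝ) • c i := by
      have h0 : u (g v) = v := congrFun hug v
      have h4 : psiMap bβ v = psiMap bβ (u (g v)) := by rw [h0]
      rw [h4, psiMap_weyl bβ hu]
    -- positivity/negativity
    have hR1 := hRS.1 b
    have hcases : (∀ i, 0 ≤ g v i) ∨ (∀ i, g v i ≤ 0) := by
      have := hwmem
      rw [hR1] at this
      rcases this with ⟨_, h⟩ | ⟨w', ⟨_, hw'⟩, hww⟩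
      · exact Or.inl h
      · refine Or.inr fun i => ?_
        have h5 := congrFun hww i
        simp only [Pi.neg_apply] at h5
        have h6 := hw' i
        omega
    ext x
    simp only [Set.mem_inter_iff, Set.mem_empty_iff_false, iff_false, not_and]
    intro hxH hxK
    have hx0 : psiMap bβ v x = 0 := hxH
    have hxval : psiMap bβ v x = ∑ i, ((g v) i : ℝ) * c i x := by
      rw [hval]
      simp [Finset.sum_apply]
    obtain ⟨i0, hi0⟩ : ∃ i, g v i ≠ 0 := by
      by_contra h
      push_neg at h
      exact hwne (funext h)
    rcases hcases with hpos | hneg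
    · have : 0 < ∑ i, ((g v) i : ℝ) * c i x := by
        refine Finset.sum_pos' (fun i _ => ?_) ⟨i0, Finset.mem_univ i0, ?_⟩
        · exact mul_nonneg (by exact_mod_cast hpos i) (hxK i).le
        · have h1 : (0 : ℝ) < (g v i0 : ℝ) := by
            have := hpos i0
            have : 0 < g v i0 := lt_of_le_of_ne this (Ne.symm hi0)
            exact_mod_cast this
          exact mul_pos h1 (hxK i0)
      rw [← hxval] at this
      linarith
    · have : ∑ i, ((g v) i : ℝ) * c i x < 0 := by
        have : 0 < ∑ i, (-(g v i : ℝ)) * c i x := by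
          refine Finset.sum_pos' (fun i _ => ?_) ⟨i0, Finset.mem_univ i0, ?_⟩
          · refine mul_nonneg ?_ (hxK i).le
            have := hneg i
            simp only [Left.nonneg_neg_iff]
            exact_mod_cast this
          · have h1 : (0 : ℝ) < -(g v i0 : ℝ) := by
              have h2 : g v i0 < 0 := lt_of_le_of_ne (hneg i0) hi0
              have : (g v i0 : ℝ) < 0 := by exact_mod_cast h2
              linarith
            exact mul_pos h1 (hxK i0)
        have heq : ∑ i, (-(g v i : ℝ)) * c i x = -∑ i, ((g v) i : ℝ) * c i x := by
          rw [← Finset.sum_neg_distrib]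
          exact Finset.sum_congr rfl fun i _ => by ring
        rw [heq] at this
        linarith
      rw [← hxval] at this
      linarith
end
end
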